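/- For a Hermitian matrix H = x x* − x₀ x₀* where x, x₀ ∈ ℂ^n, ‖x‖₁ ≤ ‖x₀‖₁, and T₀ = supp(x₀), the ℓ¹ norm of H restricted off the T₀×T₀ block is at most the ℓ¹ norm of H restricted to the T₀×T₀ block: ‖H − H_{T₀,T₀}‖₁ ≤ ‖H_{T₀,T₀}‖₁. -/
import Mathlib


open Finset

theorem stmt_13 (n : ℕ) (x x₀ : Fin n → ℂ)
    (h1 : ∑ i, ‖x i‖ ≤ ∑ i, ‖x₀ i‖) (T₀ : Finset (Fin n))
    (hT₀ : ∀ i, x₀ i ≠ 0 ↔ i ∈ T₀)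
    (H : Matrix (Fin n) (Fin n) ℂ)
    (hH : ∀ i j, H i j = x i * starRingEnd ℂ (x j) - x₀ i * starRingEnd ℂ (x₀ j)) :
    ∑ p ∈ (Finset.univ ×ˢ Finset.univ).filter (fun p : Fin n × Fin n => ¬(p.1 ∈ T₀ ∧ p.2 ∈ T₀)),
        ‖H p.1 p.2‖
      ≤ ∑ i ∈ T₀, ∑ j ∈ T₀, ‖H i j‖ := by
  have hx0 : ∀ i ∉ T₀, x₀ i = 0 := fun i hi => by
    by_contra h; exact hi ((hT₀ i).mp h)
  set A := ∑ i, ‖x i‖ with hA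
  set B := ∑ i, ‖x₀ i‖ with hB
  set S := ∑ i ∈ T₀, ‖x i‖ with hS
  have hSA : 0 ≤ S := Finset.sum_nonneg fun _ _ => norm_nonneg _
  have hAnn : 0 ≤ A := Finset.sum_nonneg fun _ _ => norm_nonneg _
  -- rewrite LHS
  have key : ∀ p ∈ (Finset.univ ×ˢ Finset.univ).filter
      (fun p : Fin n × Fin n => ¬(p.1 ∈ T₀ ∧ p.2 ∈ T₀)),
      ‖H p.1 p.2‖ = ‖x p.1‖ * ‖x p.2‖ := by
    intro p hp
    simp only [Finset.mem_filter] at hp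
    have hz : x₀ p.1 * starRingEnd ℂ (x₀ p.2) = 0 := by
      rcases not_and_or.mp hp.2 with h | h
      · rw [hx0 _ h, zero_mul]
      · rw [hx0 _ h, map_zero, mul_zero]
    rw [hH, hz, sub_zero, norm_mul, RCLike.norm_conj]
  rw [Finset.sum_congr rfl key]
  have hfilter : (Finset.univ ×ˢ Finset.univ).filter
      (fun p : Fin n × Fin n => (p.1 ∈ T₀ ∧ p.2 ∈ T₀)) = T₀ ×ˢ T₀ := by
    ext p; simp [Finset.mem_product]
  have htotal : ∑ p ∈ (Finset.univ ×ˢ Finset.univ : Finset (Fin n × Fin n)),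
      ‖x p.1‖ * ‖x p.2‖ = A * A := by
    rw [Finset.sum_product, hA, Finset.sum_mul_sum]
  have hblock : ∑ p ∈ T₀ ×ˢ T₀, ‖x p.1‖ * ‖x p.2‖ = S * S := by
    rw [Finset.sum_product, hS, Finset.sum_mul_sum]
  have hsplit := Finset.sum_filter_add_sum_filter_not
    (Finset.univ ×ˢ Finset.univ : Finset (Fin n × Fin n))
    (fun p : Fin n × Fin n => (p.1 ∈ T₀ ∧ p.2 ∈ T₀))
    (fun p => ‖x p.1‖ * ‖x p.2‖)
  rw [hfilter, hblock, htotal] at hsplit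
  have hLHS : ∑ p ∈ (Finset.univ ×ˢ Finset.univ).filter
      (fun p : Fin n × Fin n => ¬(p.1 ∈ T₀ ∧ p.2 ∈ T₀)),
      ‖x p.1‖ * ‖x p.2‖ = A * A - S * S := by linarith
  rw [hLHS]
  -- lower bound on RHS
  have hBsub : ∑ i ∈ T₀, ‖x₀ i‖ = B := by
    rw [hB]
    exact Finset.sum_subset (Finset.subset_univ _)
      (fun i _ hi => by rw [hx0 i hi, norm_zero])
  have hRHS : B * B - S * S ≤ ∑ i ∈ T₀, ∑ j ∈ T₀, ‖H i j‖ := by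
    have step : ∀ i ∈ T₀, ∀ j ∈ T₀,
        ‖x₀ i‖ * ‖x₀ j‖ - ‖x i‖ * ‖x j‖ ≤ ‖H i j‖ := by
      intro i _ j _
      rw [hH]
      calc ‖x₀ i‖ * ‖x₀ j‖ - ‖x i‖ * ‖x j‖
          = ‖x₀ i * starRingEnd ℂ (x₀ j)‖ - ‖x i * starRingEnd ℂ (x j)‖ := by
            rw [norm_mul, norm_mul, RCLike.norm_conj, RCLike.norm_conj]
        _ ≤ ‖x i * starRingEnd ℂ (x j) - x₀ i * starRingEnd ℂ (x₀ j)‖ := by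
            have := norm_sub_norm_le (x₀ i * starRingEnd ℂ (x₀ j))
              (x i * starRingEnd ℂ (x j))
            have h2 : ‖x₀ i * starRingEnd ℂ (x₀ j) - x i * starRingEnd ℂ (x j)‖
                = ‖x i * starRingEnd ℂ (x j) - x₀ i * starRingEnd ℂ (x₀ j)‖ :=
              norm_sub_rev _ _
            linarith
    calc B * B - S * S
        = ∑ i ∈ T₀, ∑ j ∈ T₀, (‖x₀ i‖ * ‖x₀ j‖ - ‖x i‖ * ‖x j‖) := by
          simp only [Finset.sum_sub_distrib, ← Finset.sum_mul_sum, hBsub, hS]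
      _ ≤ ∑ i ∈ T₀, ∑ j ∈ T₀, ‖H i j‖ :=
          Finset.sum_le_sum fun i hi => Finset.sum_le_sum fun j hj => step i hi j hj
  have hAB : A * A ≤ B * B := mul_self_le_mul_self hAnn h1
  linarith
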